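/- The map f : [0,1] → [0,1], f(x) = 1 − x, does not have mean ergodic shadowing. -/

import Mathlib

open Filter Metric

noncomputable def cnt (E : Set ℕ) (n : ℕ) : ℝ :=
  ∑ i ∈ Finset.range n, Set.indicator E (fun _ => (1 : ℝ)) i

def DensityZero (E : Set ℕ) : Prop :=
  Filter.Tendsto (fun n : ℕ => cnt E n / n) Filter.atTop (nhds 0)

noncomputable def upperDensity (E : Set ℕ) : ℝ :=
  Filter.limsup (fun n : ℕ => cnt E n / n) Filter.atTop

noncomputable def lowerDensity (E : Set ℕ) : ℝ :=
  Filter.liminf (fun n : ℕ => cnt E n / n) Filter.atTop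

variable {X : Type*}

def ErgodicPseudoOrbit [MetricSpace X] (f : X → X) (δ : ℝ) (ξ : ℕ → X) : Prop :=
  DensityZero {i | δ ≤ dist (f (ξ i)) (ξ (i + 1))}

def AvgShadows [MetricSpace X] (f : X → X) (ε : ℝ) (p : X) (ξ : ℕ → X) : Prop :=
  Filter.limsup (fun n : ℕ => (∑ i ∈ Finset.range n, dist (f^[i] p) (ξ i)) / n) Filter.atTop < ε

def MeanErgodicShadowingAvg [MetricSpace X] (f : X → X) : Prop :=
  ∀ ε > 0, ∃ δ > 0, ∀ ξ : ℕ → X, ErgodicPseudoOrbit f δ ξ → ∃ p : X, AvgShadows f ε p ξ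

def MeanErgodicShadowingDens [MetricSpace X] (f : X → X) : Prop :=
  ∀ ε > 0, ∃ δ > 0, ∀ ξ : ℕ → X, ErgodicPseudoOrbit f δ ξ →
    ∃ p : X, upperDensity {i | ε ≤ dist (f^[i] p) (ξ i)} < ε

def Shadowing [MetricSpace X] (f : X → X) : Prop :=
  ∀ ε > 0, ∃ δ > 0, ∀ ξ : ℕ → X, (∀ i, dist (f (ξ i)) (ξ (i + 1)) < δ) →
    ∃ p : X, ∀ i, dist (f^[i] p) (ξ i) < ε

namespace Stmt4Aux

noncomputable def half : unitInterval := ⟨1/2, by norm_num⟩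

noncomputable def xi (i : ℕ) : unitInterval :=
  if Nat.log 2 (i+1) % 2 = 0 then (if i % 2 = 0 then 0 else 1) else half

lemma coe_half : (half : ℝ) = 1/2 := rfl

lemma symm_half : unitInterval.symm half = half := by
  apply Subtype.ext
  rw [unitInterval.coe_symm_eq, coe_half]
  norm_num

lemma dist_eq (a b : unitInterval) : dist a b = |(a : ℝ) - (b : ℝ)| := by
  rw [Subtype.dist_eq, Real.dist_eq]

lemma dist_le_one (a b : unitInterval) : dist a b ≤ 1 := by
  rw [dist_eq, abs_sub_le_iff]
  constructor <;> linarith [a.2.1, a.2.2, b.2.1, b.2.2]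

lemma dist_symm_one (p : unitInterval) : dist (unitInterval.symm p) 1 = dist p 0 := by
  rw [dist_eq, dist_eq, unitInterval.coe_symm_eq, Set.Icc.coe_one, Set.Icc.coe_zero]
  rw [show (1:ℝ) - (p:ℝ) - 1 = -((p:ℝ) - 0) by ring, abs_neg]

lemma dist_symm_half (p : unitInterval) :
    dist (unitInterval.symm p) half = dist p half := by
  rw [dist_eq, dist_eq, unitInterval.coe_symm_eq, coe_half]
  rw [show (1:ℝ) - (p:ℝ) - 1/2 = -((p:ℝ) - 1/2) by ring, abs_neg]

lemma iterate_symm (p : unitInterval) (i : ℕ) :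
    (unitInterval.symm)^[i] p = if i % 2 = 0 then p else unitInterval.symm p := by
  induction i with
  | zero => simp
  | succ n ih =>
    rw [Function.iterate_succ_apply', ih]
    rcases Nat.mod_two_eq_zero_or_one n with h | h
    · have h2 : (n+1) % 2 = 1 := by omega
      simp [h, h2]
    · have h2 : (n+1) % 2 = 0 := by omega
      simp [h, h2, unitInterval.symm_symm]

lemma xi_step (i : ℕ) (h : Nat.log 2 (i+2) = Nat.log 2 (i+1)) :
    unitInterval.symm (xi i) = xi (i+1) := by
  unfold xi
  have h2 : i + 1 + 1 = i + 2 := rfl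
  rw [h2, h]
  rcases Nat.mod_two_eq_zero_or_one (Nat.log 2 (i+1)) with hl | hl
  · rcases Nat.mod_two_eq_zero_or_one i with hi | hi
    · have hi1 : (i+1) % 2 = 1 := by omega
      simp [hl, hi, hi1, unitInterval.symm_zero]
    · have hi1 : (i+1) % 2 = 0 := by omega
      simp [hl, hi, hi1, unitInterval.symm_one]
  · simp [hl, symm_half]

/-- boundary set -/
def S : Set ℕ := {i | Nat.log 2 (i+2) ≠ Nat.log 2 (i+1)}

lemma cnt_nonneg (E : Set ℕ) (n : ℕ) : 0 ≤ cnt E n :=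
  Finset.sum_nonneg fun i _ => Set.indicator_nonneg (fun _ _ => zero_le_one) i

lemma cnt_mono {E F : Set ℕ} (h : E ⊆ F) (n : ℕ) : cnt E n ≤ cnt F n :=
  Finset.sum_le_sum fun i _ =>
    Set.indicator_le_indicator_of_subset h (fun _ => zero_le_one) i

open Classical in
lemma cnt_eq_card (E : Set ℕ) (n : ℕ) :
    cnt E n = (((Finset.range n).filter (· ∈ E)).card : ℝ) := by
  unfold cnt
  rw [← Finset.sum_boole]
  refine Finset.sum_congr rfl fun i _ => ?_
  by_cases h : i ∈ E <;> simp [h, Set.indicator_apply]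

open Classical in
lemma cnt_S_le (n : ℕ) : cnt S n ≤ (Nat.log 2 (n+1) : ℝ) := by
  rw [cnt_eq_card]
  have hcard : ((Finset.range n).filter (· ∈ S)).card ≤ Nat.log 2 (n+1) := by
    have hsub : ∀ i ∈ (Finset.range n).filter (· ∈ S),
        Nat.log 2 (i+2) ∈ Finset.Icc 1 (Nat.log 2 (n+1)) := by
      intro i hi
      rw [Finset.mem_filter, Finset.mem_range] at hi
      rw [Finset.mem_Icc]
      constructor
      · rw [Nat.le_log_iff_pow_le (by norm_num) (by omega)]
        omega
      · exact Nat.log_mono_right (by omega)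
    have hinj : ∀ i ∈ (Finset.range n).filter (· ∈ S),
        ∀ j ∈ (Finset.range n).filter (· ∈ S),
        Nat.log 2 (i+2) = Nat.log 2 (j+2) → i = j := by
      have key : ∀ i j : ℕ, i < j → j ∈ S → Nat.log 2 (i+2) < Nat.log 2 (j+2) := by
        intro i j hij hjS
        have h1 : Nat.log 2 (i+2) ≤ Nat.log 2 (j+1) := Nat.log_mono_right (by omega)
        have h2 : Nat.log 2 (j+1) < Nat.log 2 (j+2) :=
          lt_of_le_of_ne (Nat.log_mono_right (by omega)) (Ne.symm hjS)
        omega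
      intro i hi j hj hij
      rw [Finset.mem_filter] at hi hj
      rcases lt_trichotomy i j with h | h | h
      · exact absurd hij (Nat.ne_of_lt (key i j h hj.2))
      · exact h
      · exact absurd hij.symm (Nat.ne_of_lt (key j i h hi.2))
    calc ((Finset.range n).filter (· ∈ S)).card
        ≤ (Finset.Icc 1 (Nat.log 2 (n+1))).card :=
          Finset.card_le_card_of_injOn _ hsub hinj
      _ = Nat.log 2 (n+1) := by rw [Nat.card_Icc]; omega
  exact_mod_cast hcard

lemma log_div_tendsto :
    Filter.Tendsto (fun n : ℕ => (Nat.log 2 (n+1) : ℝ) / n) Filter.atTop (nhds 0) := by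
  have base : Filter.Tendsto (fun x : ℝ => Real.log x / x) Filter.atTop (nhds 0) :=
    Real.isLittleO_log_id_atTop.tendsto_div_nhds_zero
  have hcast : Filter.Tendsto (fun n : ℕ => ((n : ℝ) + 1)) Filter.atTop Filter.atTop :=
    Filter.tendsto_atTop_add_const_right _ 1 tendsto_natCast_atTop_atTop
  have h4 : Filter.Tendsto (fun n : ℕ => 4 * (Real.log ((n : ℝ)+1) / ((n : ℝ)+1)))
      Filter.atTop (nhds 0) := by
    have := (base.comp hcast).const_mul (4 : ℝ)
    simpa using this
  refine tendsto_of_tendsto_of_tendsto_of_le_of_le' tendsto_const_nhds h4 ?_ ?_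
  · filter_upwards [Filter.eventually_ge_atTop 1] with n hn
    positivity
  · filter_upwards [Filter.eventually_ge_atTop 1] with n hn
    have hn1 : (1 : ℝ) ≤ (n : ℝ) := by exact_mod_cast hn
    have hlogb : (Nat.log 2 (n+1) : ℝ) ≤ Real.logb 2 ((n : ℝ)+1) := by
      have := Real.natLog_le_logb (n+1) 2
      rwa [Nat.cast_add, Nat.cast_one] at this
    have hlog2 : (1:ℝ)/2 < Real.log 2 := by
      have := Real.log_two_gt_d9; linarith
    have hlognn : 0 ≤ Real.log ((n : ℝ)+1) := Real.log_nonneg (by linarith)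
    have h1 : Real.logb 2 ((n:ℝ)+1) ≤ 2 * Real.log ((n:ℝ)+1) := by
      rw [Real.logb, div_le_iff₀ (by linarith)]
      nlinarith
    have h2 : (Nat.log 2 (n+1) : ℝ) / n ≤ 2 * Real.log ((n:ℝ)+1) / n := by
      gcongr
      linarith
    calc (Nat.log 2 (n+1) : ℝ) / n ≤ 2 * Real.log ((n:ℝ)+1) / n := h2
      _ ≤ 4 * (Real.log ((n:ℝ)+1) / ((n:ℝ)+1)) := by
          rw [div_le_iff₀ (by linarith), mul_comm (4:ℝ), mul_assoc, div_mul_eq_mul_div,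
            le_div_iff₀ (by linarith)]
          nlinarith

lemma densityZero_S : DensityZero S := by
  unfold DensityZero
  refine tendsto_of_tendsto_of_tendsto_of_le_of_le' tendsto_const_nhds log_div_tendsto ?_ ?_
  · filter_upwards with n
    have := cnt_nonneg S n
    positivity
  · filter_upwards with n
    gcongr
    exact cnt_S_le n

lemma dist_block (p : unitInterval) (m i : ℕ) (h : Nat.log 2 (i+1) = m) :
    dist ((unitInterval.symm)^[i] p) (xi i)
      = if m % 2 = 0 then dist p 0 else dist p half := by
  rw [iterate_symm]
  unfold xi
  rw [h]
  rcases Nat.mod_two_eq_zero_or_one m with hm | hm <;>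
    rcases Nat.mod_two_eq_zero_or_one i with hi | hi <;>
    simp [hm, hi, dist_symm_one, dist_symm_half]

lemma avg_lower (p : unitInterval) (m : ℕ) :
    (if m % 2 = 0 then dist p 0 else dist p half) / 2
      ≤ (∑ i ∈ Finset.range (2^(m+1) - 1),
          dist ((unitInterval.symm)^[i] p) (xi i)) / ((2^(m+1) - 1 : ℕ) : ℝ) := by
  set d := if m % 2 = 0 then dist p 0 else dist p half with hd
  have hd0 : 0 ≤ d := by
    rw [hd]; split <;> exact dist_nonneg
  set n := 2^(m+1) - 1 with hn
  have hpow : 2^m ≥ 1 := Nat.one_le_two_pow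
  have hpow2 : (2:ℕ)^(m+1) = 2 * 2^m := by ring
  have hico : Finset.Ico (2^m - 1) (2^(m+1) - 1) ⊆ Finset.range n := by
    intro i hi
    rw [Finset.mem_Ico] at hi
    rw [Finset.mem_range]
    exact hi.2
  have hsum1 : ∑ i ∈ Finset.Ico (2^m - 1) (2^(m+1) - 1),
      dist ((unitInterval.symm)^[i] p) (xi i)
      ≤ ∑ i ∈ Finset.range n, dist ((unitInterval.symm)^[i] p) (xi i) :=
    Finset.sum_le_sum_of_subset_of_nonneg hico (fun _ _ _ => dist_nonneg)
  have hval : ∀ i ∈ Finset.Ico (2^m - 1) (2^(m+1) - 1),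
      dist ((unitInterval.symm)^[i] p) (xi i) = d := by
    intro i hi
    rw [Finset.mem_Ico] at hi
    apply dist_block
    apply Nat.log_eq_of_pow_le_of_lt_pow <;> omega
  have hsum2 : ∑ i ∈ Finset.Ico (2^m - 1) (2^(m+1) - 1),
      dist ((unitInterval.symm)^[i] p) (xi i) = (2:ℝ)^m * d := by
    rw [Finset.sum_congr rfl hval, Finset.sum_const, Nat.card_Ico]
    have h3 : 2^(m+1) - 1 - (2^m - 1) = 2^m := by omega
    rw [h3, nsmul_eq_mul]
    norm_cast
  have hncast : ((n : ℕ) : ℝ) = 2^(m+1) - 1 := by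
    rw [hn, Nat.cast_sub Nat.one_le_two_pow]
    push_cast
    ring
  have hnpos : (0:ℝ) < ((n:ℕ):ℝ) := by
    have h5 : 0 < n := by omega
    exact_mod_cast h5
  rw [div_le_div_iff₀ (by norm_num) hnpos]
  have hle : ((n:ℕ):ℝ) ≤ 2 * 2^m := by
    rw [hncast, pow_succ]
    nlinarith [pow_pos (show (0:ℝ) < 2 by norm_num) m]
  nlinarith [hsum1, hsum2, mul_le_mul_of_nonneg_left hle hd0]

lemma avg_bounded (p : unitInterval) (ξ : ℕ → unitInterval) :
    Filter.IsBoundedUnder (· ≤ ·) Filter.atTop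
      (fun n : ℕ => (∑ i ∈ Finset.range n, dist ((unitInterval.symm)^[i] p) (ξ i)) / n) := by
  refine Filter.isBoundedUnder_of ⟨1, fun n => ?_⟩
  rcases Nat.eq_zero_or_pos n with h | h
  · simp [h]
  · rw [div_le_one (by exact_mod_cast h)]
    calc ∑ i ∈ Finset.range n, dist ((unitInterval.symm)^[i] p) (ξ i)
        ≤ ∑ i ∈ Finset.range n, 1 := Finset.sum_le_sum fun i _ => dist_le_one _ _
      _ = n := by simp

lemma freq (p : unitInterval) (r : ℕ) (hr : r < 2) :
    ∃ᶠ n in Filter.atTop,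
      (if r = 0 then dist p 0 else dist p half) / 2
        ≤ (∑ i ∈ Finset.range n, dist ((unitInterval.symm)^[i] p) (xi i)) / n := by
  rw [Filter.frequently_atTop]
  intro N
  refine ⟨2^(2*N + r + 1) - 1, ?_, ?_⟩
  · have h1 : N < 2^N := Nat.lt_two_pow_self
    have h2 : 2^N ≤ 2^(2*N + r + 1) := Nat.pow_le_pow_right (by norm_num) (by omega)
    omega
  · have h := avg_lower p (2*N + r)
    have hmr : (2*N + r) % 2 = r := by omega
    rw [hmr] at h
    exact h

end Stmt4Aux

open Stmt4Aux in
theorem stmt4 : ¬ MeanErgodicShadowingAvg (unitInterval.symm) := by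
  intro h
  obtain ⟨δ, hδ, H⟩ := h (1/8) (by norm_num)
  have herg : ErgodicPseudoOrbit unitInterval.symm δ xi := by
    unfold ErgodicPseudoOrbit DensityZero
    have hsub : {i | δ ≤ dist (unitInterval.symm (xi i)) (xi (i+1))} ⊆ S := by
      intro i hi
      by_contra hiS
      simp only [S, Set.mem_setOf_eq, not_not] at hiS
      have hstep := xi_step i hiS
      rw [Set.mem_setOf_eq, hstep, dist_self] at hi
      linarith
    refine tendsto_of_tendsto_of_tendsto_of_le_of_le' tendsto_const_nhds densityZero_S ?_ ?_
    · filter_upwards with n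
      have := cnt_nonneg {i | δ ≤ dist (unitInterval.symm (xi i)) (xi (i+1))} n
      positivity
    · filter_upwards with n
      gcongr
      exact cnt_mono hsub n
  obtain ⟨p, hp⟩ := H xi herg
  unfold AvgShadows at hp
  have h0 := Filter.le_limsup_of_frequently_le (freq p 0 (by norm_num)) (avg_bounded p xi)
  have h1 := Filter.le_limsup_of_frequently_le (freq p 1 (by norm_num)) (avg_bounded p xi)
  rw [if_pos rfl] at h0
  rw [if_neg (by norm_num)] at h1
  have htri : (1:ℝ)/2 ≤ dist p 0 + dist p half := by
    have ht : dist (0:unitInterval) half ≤ dist (0:unitInterval) p + dist p half :=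
      dist_triangle _ _ _
    have hdh : dist (0:unitInterval) half = 1/2 := by
      rw [dist_eq, coe_half, Set.Icc.coe_zero]
      norm_num
    rw [dist_comm (0:unitInterval) p] at ht
    linarith
  linarith
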